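/- For an integer k, there exists a 3×2 integer matrix P with Pᵀ·diag(1,1,-1)·P = k·I₂ if and only if k is expressible as a sum of two squares of integers, i.e., there exist integers m, n with k = m² + n². (This is the algebraic content of: there is a degree k map f: (ℂP²)^{♯2}♯(ℂP²-bar) → ℂP²♯ℂP² if and only if k ≥ 0 and every prime of the form 4p-1 dividing k occurs to an even power in the prime factorization of k.) -/

import Mathlib

open Matrix

lemma key_div {S k : ℤ} {X Y c f : ℤ} (hS : S = c ^ 2 + f ^ 2) (hSpos : 0 < S)
    (h : S * k = X ^ 2 + Y ^ 2) : ∃ m n : ℤ, k = m ^ 2 + n ^ 2 := by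
  have hk0 : 0 ≤ k := by nlinarith [sq_nonneg X, sq_nonneg Y]
  rcases eq_or_lt_of_le hk0 with hk | hk
  · exact ⟨0, 0, by simp [← hk]⟩
  set s := S.toNat with hs
  set kk := k.toNat with hkk
  have hsS : (s : ℤ) = S := Int.toNat_of_nonneg hSpos.le
  have hkK : (kk : ℤ) = k := Int.toNat_of_nonneg hk0
  have hsum : s * kk = X.natAbs ^ 2 + Y.natAbs ^ 2 := by
    zify; rw [hsS, hkK, h]; simp [sq_abs]
  have hsrep : s = c.natAbs ^ 2 + f.natAbs ^ 2 := by
    zify; rw [hsS, hS]; simp [sq_abs]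
  have hsne : s ≠ 0 := by omega
  have hkne : kk ≠ 0 := by
    omega
  have hN : ∀ {q : ℕ}, q.Prime → q % 4 = 3 → Even (padicValNat q (s * kk)) := by
    intro q hq h3
    by_cases hmem : q ∈ (s * kk).primeFactors
    · exact Nat.eq_sq_add_sq_iff.mp ⟨X.natAbs, Y.natAbs, hsum⟩ q hmem h3
    · have hnd : ¬ q ∣ s * kk := fun hd =>
        hmem (Nat.mem_primeFactors.mpr ⟨hq, hd, mul_ne_zero hsne hkne⟩)
      rw [padicValNat.eq_zero_of_not_dvd hnd]; exact Even.zero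
  have hSq : ∀ {q : ℕ}, q.Prime → q % 4 = 3 → Even (padicValNat q s) := by
    intro q hq h3
    by_cases hmem : q ∈ s.primeFactors
    · exact Nat.eq_sq_add_sq_iff.mp ⟨c.natAbs, f.natAbs, hsrep⟩ q hmem h3
    · have hnd : ¬ q ∣ s := fun hd =>
        hmem (Nat.mem_primeFactors.mpr ⟨hq, hd, hsne⟩)
      rw [padicValNat.eq_zero_of_not_dvd hnd]; exact Even.zero
  have hK : ∀ {q : ℕ}, q.Prime → q % 4 = 3 → Even (padicValNat q kk) := by
    intro q hq h3
    have : Fact q.Prime := ⟨hq⟩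
    have hmul := padicValNat.mul (p := q) hsne hkne
    have := hN hq h3
    rw [hmul] at this
    exact (Nat.even_add.mp this).mp (hSq hq h3)
  obtain ⟨x, y, hxy⟩ := Nat.eq_sq_add_sq_iff.mpr
    (fun q hq h3 => hK (Nat.prime_of_mem_primeFactors hq) h3)
  exact ⟨x, y, by rw [← hkK]; exact_mod_cast hxy⟩

theorem degree_cp2_two_cp2bar_to_cp2_two (k : ℤ) :
    (∃ P : Matrix (Fin 3) (Fin 2) ℤ,
        Pᵀ * !![(1 : ℤ), 0, 0; 0, 1, 0; 0, 0, -1] * P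
          = k • (1 : Matrix (Fin 2) (Fin 2) ℤ)) ↔
      ∃ m n : ℤ, k = m ^ 2 + n ^ 2 := by
  constructor
  · rintro ⟨P, hP⟩
    have h00 := congrFun (congrFun hP 0) 0
    have h01 := congrFun (congrFun hP 0) 1
    have h11 := congrFun (congrFun hP 1) 1
    simp [Matrix.mul_apply, Fin.sum_univ_succ, Matrix.one_apply] at h00 h01 h11
    set a := P 0 0; set b := P 1 0; set c := P 2 0
    set d := P 0 1; set e := P 1 1; set f := P 2 1
    by_cases hcf : c = 0 ∧ f = 0
    · exact ⟨a, b, by rw [hcf.1] at h00; linarith [h00]⟩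
    · have hSpos : 0 < c ^ 2 + f ^ 2 := by
        rcases not_and_or.mp hcf with hc | hf
        · have := sq_pos_of_ne_zero hc
          nlinarith [sq_nonneg f]
        · have := sq_pos_of_ne_zero hf
          nlinarith [sq_nonneg c]
      refine key_div rfl hSpos (X := f * a - c * d) (Y := f * b - c * e) ?_
      linear_combination (-(f ^ 2) * h00) - c ^ 2 * h11 + 2 * c * f * h01
  · rintro ⟨m, n, rfl⟩
    refine ⟨!![m, -n; n, m; 0, 0], ?_⟩
    ext i j
    fin_cases i <;> fin_cases j <;>
      simp [Matrix.mul_apply, Fin.sum_univ_succ, Matrix.one_apply] <;> ring
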